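/- Let A_1, ..., A_m be mutually commuting complex n×n matrices satisfying A_1* A_1 + ... + A_m* A_m = Id, and suppose there exists a positive definite (full rank positive semidefinite) matrix ρ such that Σ_α A_α ρ A_α* = ρ. Then every A_α is normal. -/

import Mathlib

open Matrix
open scoped ComplexOrder

private lemma diag_dot {n : ℕ} (D : Matrix (Fin n) (Fin n) ℂ) (i : Fin n) :
    (D * Dᴴ) i i = dotProduct (D i) (star (D i)) := by
  simp [mul_apply, dotProduct, conjTranspose_apply]

private lemma trace_mul_conjTranspose_self_nonneg {n : ℕ} (D : Matrix (Fin n) (Fin n) ℂ) :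
    0 ≤ (D * Dᴴ).trace := by
  rw [Matrix.trace]
  refine Finset.sum_nonneg fun i _ => ?_
  rw [Matrix.diag_apply, diag_dot]
  exact dotProduct_self_star_nonneg _

private lemma eq_zero_of_trace_mul_conjTranspose_self {n : ℕ} (D : Matrix (Fin n) (Fin n) ℂ)
    (h : (D * Dᴴ).trace = 0) : D = 0 := by
  rw [Matrix.trace] at h
  have h' := (Finset.sum_eq_zero_iff_of_nonneg (fun i _ => by
    rw [Matrix.diag_apply, diag_dot]; exact dotProduct_self_star_nonneg (D i))).mp h
  ext i j
  have := h' i (Finset.mem_univ i)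
  rw [Matrix.diag_apply, diag_dot, dotProduct_self_star_eq_zero] at this
  exact congrFun this j

/-- Commuting Kraus operators admitting a faithful (positive definite) stationary state
are normal. -/
theorem commuting_kraus_with_faithful_state_normal (n m : ℕ)
    (A : Fin m → Matrix (Fin n) (Fin n) ℂ)
    (hcomm : ∀ α β, A α * A β = A β * A α)
    (hnorm : ∑ α, (A α)ᴴ * A α = 1)
    (ρ : Matrix (Fin n) (Fin n) ℂ) (hρ : ρ.PosDef)
    (hstat : ∑ α, A α * ρ * (A α)ᴴ = ρ) :
    ∀ α, A α * (A α)ᴴ = (A α)ᴴ * A α := by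
  intro β
  set B : Matrix (Fin n) (Fin n) ℂ := A β * (A β)ᴴ with hB
  set C : Fin m → Matrix (Fin n) (Fin n) ℂ := fun α => (A β)ᴴ * A α - A α * (A β)ᴴ with hCdef
  -- per-α expansion of (C α)ᴴ * C α using commutation
  have key : ∀ α, (C α)ᴴ * C α =
      (A α)ᴴ * (B * A α) - (A α)ᴴ * (A α * B) - A β * ((A β)ᴴ * ((A α)ᴴ * A α))
        + A β * ((A α)ᴴ * (A α * (A β)ᴴ)) := by
    intro α
    have h1 : A β * A α = A α * A β := hcomm β α
    have h2 : (A α)ᴴ * (A β)ᴴ = (A β)ᴴ * (A α)ᴴ := by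
      rw [← conjTranspose_mul, ← conjTranspose_mul, hcomm]
    simp only [hCdef, conjTranspose_sub, conjTranspose_mul, conjTranspose_conjTranspose,
      Matrix.sub_mul, Matrix.mul_sub, Matrix.mul_assoc, hB]
    rw [← Matrix.mul_assoc (A β) (A α) ((A β)ᴴ), h1, Matrix.mul_assoc (A α) (A β) ((A β)ᴴ)]
    rw [show (A α)ᴴ * ((A β)ᴴ * A α) = (A β)ᴴ * ((A α)ᴴ * A α) by
      rw [← Matrix.mul_assoc, h2, Matrix.mul_assoc]]
    abel
  -- sum identity
  have hsum : ∑ α, (C α)ᴴ * C α = (∑ α, (A α)ᴴ * (B * A α)) - B := by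
    have s2 : ∑ α, (A α)ᴴ * (A α * B) = B := by
      simp_rw [← Matrix.mul_assoc]
      rw [← Finset.sum_mul, hnorm, Matrix.one_mul]
    have s3 : ∑ α, A β * ((A β)ᴴ * ((A α)ᴴ * A α)) = B := by
      rw [Finset.sum_congr rfl (fun α _ => by rw [← Matrix.mul_assoc] :
        ∀ α ∈ Finset.univ, A β * ((A β)ᴴ * ((A α)ᴴ * A α)) = B * ((A α)ᴴ * A α)),
        ← Finset.mul_sum, hnorm, Matrix.mul_one]
    have s4 : ∑ α, A β * ((A α)ᴴ * (A α * (A β)ᴴ)) = B := by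
      rw [Finset.sum_congr rfl (fun α _ => by rw [← Matrix.mul_assoc, ← Matrix.mul_assoc] :
        ∀ α ∈ Finset.univ, A β * ((A α)ᴴ * (A α * (A β)ᴴ)) = A β * (A α)ᴴ * A α * (A β)ᴴ)]
      have : ∀ α : Fin m, A β * (A α)ᴴ * A α * (A β)ᴴ = A β * ((A α)ᴴ * A α) * (A β)ᴴ := by
        intro α; rw [Matrix.mul_assoc (A β) ((A α)ᴴ) (A α)]
      rw [Finset.sum_congr rfl fun α _ => this α, ← Finset.sum_mul, ← Finset.mul_sum, hnorm,
        Matrix.mul_one, hB]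
    calc ∑ α, (C α)ᴴ * C α
        = ∑ α, ((A α)ᴴ * (B * A α) - (A α)ᴴ * (A α * B) - A β * ((A β)ᴴ * ((A α)ᴴ * A α))
            + A β * ((A α)ᴴ * (A α * (A β)ᴴ))) :=
          Finset.sum_congr rfl fun α _ => key α
      _ = (∑ α, (A α)ᴴ * (B * A α)) - (∑ α, (A α)ᴴ * (A α * B))
            - (∑ α, A β * ((A β)ᴴ * ((A α)ᴴ * A α))) + ∑ α, A β * ((A α)ᴴ * (A α * (A β)ᴴ)) := by
          rw [Finset.sum_add_distrib, Finset.sum_sub_distrib, Finset.sum_sub_distrib]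
      _ = (∑ α, (A α)ᴴ * (B * A α)) - B := by rw [s2, s3, s4]; abel
  -- total trace vanishes
  have htr : ∑ α, (C α * ρ * (C α)ᴴ).trace = 0 := by
    have step1 : ∀ α, (C α * ρ * (C α)ᴴ).trace = ((C α)ᴴ * C α * ρ).trace := fun α =>
      Matrix.trace_mul_cycle (C α) ρ ((C α)ᴴ)
    have step2 : ∀ α, ((A α)ᴴ * (B * A α) * ρ).trace = (B * (A α * ρ * (A α)ᴴ)).trace := by
      intro α
      rw [Matrix.mul_assoc ((A α)ᴴ) (B * A α) ρ, Matrix.trace_mul_comm]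
      simp only [Matrix.mul_assoc]
    calc ∑ α, (C α * ρ * (C α)ᴴ).trace
        = ∑ α, ((C α)ᴴ * C α * ρ).trace := Finset.sum_congr rfl fun α _ => step1 α
      _ = ((∑ α, (C α)ᴴ * C α) * ρ).trace := by rw [Finset.sum_mul, Matrix.trace_sum]
      _ = ((∑ α, (A α)ᴴ * (B * A α)) * ρ).trace - (B * ρ).trace := by
          rw [hsum, Matrix.sub_mul, Matrix.trace_sub]
      _ = (∑ α, ((A α)ᴴ * (B * A α) * ρ).trace) - (B * ρ).trace := by
          rw [Finset.sum_mul, Matrix.trace_sum]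
      _ = (∑ α, (B * (A α * ρ * (A α)ᴴ)).trace) - (B * ρ).trace := by
          rw [Finset.sum_congr rfl fun α _ => step2 α]
      _ = (B * ∑ α, A α * ρ * (A α)ᴴ).trace - (B * ρ).trace := by
          rw [Finset.mul_sum, Matrix.trace_sum]
      _ = 0 := by rw [hstat, sub_self]
  -- each summand is a trace of D * Dᴴ, hence nonneg; all vanish
  open scoped MatrixOrder in
  set s : Matrix (Fin n) (Fin n) ℂ := CFC.sqrt ρ with hs
  open scoped MatrixOrder in
  have hssa : sᴴ = s := (CFC.sqrt_nonneg ρ).posSemidef.isHermitian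
  open scoped MatrixOrder in
  have hss : s * s = ρ := CFC.sqrt_mul_sqrt_self ρ hρ.posSemidef.nonneg
  have hterm : ∀ α, C α * ρ * (C α)ᴴ = (C α * s) * (C α * s)ᴴ := by
    intro α
    rw [conjTranspose_mul, hssa, ← hss]
    simp only [Matrix.mul_assoc]
  have hzero : ((C β * s) * (C β * s)ᴴ).trace = 0 := by
    have := (Finset.sum_eq_zero_iff_of_nonneg (fun α _ => by
      rw [hterm α]; exact trace_mul_conjTranspose_self_nonneg _)).mp htr β (Finset.mem_univ β)
    rw [← hterm β, this]
  have hCs : C β * s = 0 := eq_zero_of_trace_mul_conjTranspose_self _ hzero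
  have hCρ : C β * ρ = 0 := by rw [← hss, ← Matrix.mul_assoc, hCs, Matrix.zero_mul]
  have hC0 : C β = 0 := by
    have h := hρ.isUnit
    calc C β = C β * ρ * ρ⁻¹ := by
          rw [Matrix.mul_assoc, Matrix.mul_nonsing_inv _ ((Matrix.isUnit_iff_isUnit_det ρ).mp h),
            Matrix.mul_one]
      _ = 0 := by rw [hCρ, Matrix.zero_mul]
  have : (A β)ᴴ * A β = A β * (A β)ᴴ := sub_eq_zero.mp hC0
  exact this.symm
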